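/- arXiv:2112.05634 — 2 statements merged into one kernel-verified Lean document; each statement's English description precedes it below -/
import Mathlib

section
/- Let g ∈ ℝⁿ be nonzero, H a symmetric n×n matrix with all eigenvalues of absolute value at most σ, α > 0, and J = I + α·(I - (g/‖g‖₂)(g/‖g‖₂)ᵀ)·(H/‖g‖₂). Then for every a ∈ ℝⁿ, ‖Jᵀ a‖₂ ≤ (1 + α·σ/‖g‖₂)·‖a‖₂. -/
open Matrix Finset RealInnerProductSpace


variable {n : ℕ}

lemma eigen_bound (H : Matrix (Fin n) (Fin n) ℝ) (hH : H.IsHermitian)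
    (σ : ℝ) (hσ : ∀ i, |hH.eigenvalues i| ≤ σ) (hσ0 : 0 ≤ σ)
    (x : EuclideanSpace ℝ (Fin n)) :
    ‖Matrix.toEuclideanLin H x‖ ≤ σ * ‖x‖ := by
  set B := hH.eigenvectorBasis
  have hrepr : ∀ i, B.repr (Matrix.toEuclideanLin H x) i
      = hH.eigenvalues i * B.repr x i := by
    intro i
    have hsym : (Matrix.toEuclideanLin H).IsSymmetric :=
      (Matrix.isHermitian_iff_isSymmetric).1 hH
    have hBi : Matrix.toEuclideanLin H (B i) = hH.eigenvalues i • B i := by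
      apply (WithLp.equiv 2 (Fin n → ℝ)).injective
      ext j
      have := hH.mulVec_eigenvectorBasis i
      simpa [Matrix.toEuclideanLin_apply] using congrFun this j
    rw [B.repr_apply_apply, B.repr_apply_apply, ← hsym (B i) x, hBi]
    simp [real_inner_smul_left, Finset.mul_sum, mul_assoc]
  have hx : ‖x‖ = Real.sqrt (∑ i, (B.repr x i)^2) := by
    rw [← B.repr.norm_map x, EuclideanSpace.norm_eq]
    congr 1; apply Finset.sum_congr rfl; intro i _; rw [Real.norm_eq_abs, sq_abs]
  have hy : ‖Matrix.toEuclideanLin H x‖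
      = Real.sqrt (∑ i, (hH.eigenvalues i * B.repr x i)^2) := by
    rw [← B.repr.norm_map, EuclideanSpace.norm_eq]
    congr 1; apply Finset.sum_congr rfl; intro i _; rw [Real.norm_eq_abs, sq_abs, hrepr]
  rw [hx, hy]
  rw [show σ * Real.sqrt (∑ i, (B.repr x i)^2)
      = Real.sqrt (∑ i, σ^2 * (B.repr x i)^2) by
    rw [← Finset.mul_sum, Real.sqrt_mul (by positivity), Real.sqrt_sq hσ0]]
  apply Real.sqrt_le_sqrt
  apply Finset.sum_le_sum
  intro i _
  rw [mul_pow]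
  apply mul_le_mul_of_nonneg_right _ (by positivity)
  calc (hH.eigenvalues i)^2 = |hH.eigenvalues i|^2 := (sq_abs _).symm
    _ ≤ σ^2 := by apply pow_le_pow_left₀ (abs_nonneg _) (hσ i)

lemma proj_bound (u : Fin n → ℝ) (hu1 : ∑ i, u i * u i = 1)
    (x : EuclideanSpace ℝ (Fin n)) :
    ‖Matrix.toEuclideanLin (1 - Matrix.vecMulVec u u) x‖ ≤ ‖x‖ := by
  set e : EuclideanSpace ℝ (Fin n) := (WithLp.equiv 2 (Fin n → ℝ)).symm u
  set c : ℝ := ⟪e, x⟫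
  have he : ‖e‖^2 = 1 := by
    rw [← real_inner_self_eq_norm_sq, PiLp.inner_apply]
    simpa [e, sq] using hu1
  have hc : c = ∑ i, u i * x i := by simp [c, PiLp.inner_apply, e, mul_comm]
  have heq : Matrix.toEuclideanLin (1 - Matrix.vecMulVec u u) x = x - c • e := by
    apply (WithLp.equiv 2 (Fin n → ℝ)).injective
    ext j
    simp [Matrix.toEuclideanLin_apply, Matrix.sub_mulVec, Matrix.one_mulVec,
      Matrix.mulVec, Matrix.vecMulVec, dotProduct, hc, e, Finset.sum_mul,
      Finset.mul_sum, mul_assoc, mul_comm, mul_left_comm]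
  rw [heq]
  have h2 : ‖x - c • e‖^2 ≤ ‖x‖^2 := by
    rw [norm_sub_sq_real]
    have : ⟪x, c • e⟫ = c * c := by
      rw [real_inner_smul_right, real_inner_comm]
    rw [this, norm_smul]
    simp only [mul_pow, Real.norm_eq_abs, sq_abs, he]
    nlinarith
  calc ‖x - c • e‖ = Real.sqrt (‖x - c • e‖^2) := (Real.sqrt_sq (norm_nonneg _)).symm
    _ ≤ Real.sqrt (‖x‖^2) := Real.sqrt_le_sqrt h2
    _ = ‖x‖ := Real.sqrt_sq (norm_nonneg _)


/-- Proposition 1 (without projection): for J = I + α(I - uuᵀ)(H/‖g‖₂) with u = g/‖g‖₂,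
H symmetric with eigenvalues bounded by σ in absolute value, one has
‖Jᵀ a‖₂ ≤ (1 + ασ/‖g‖₂)‖a‖₂. -/
theorem stmt_6 {n : ℕ} (g : EuclideanSpace ℝ (Fin n)) (hg : g ≠ 0)
    (H : Matrix (Fin n) (Fin n) ℝ) (hH : H.IsHermitian)
    (σ : ℝ) (hσ : ∀ i, |hH.eigenvalues i| ≤ σ)
    (α : ℝ) (hα : 0 < α)
    (u : Fin n → ℝ) (hu : u = fun i => ‖g‖⁻¹ * g i)
    (J : Matrix (Fin n) (Fin n) ℝ)
    (hJ : J = 1 + α • ((1 - Matrix.vecMulVec u u) * (‖g‖⁻¹ • H))) :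
    ∀ a : EuclideanSpace ℝ (Fin n),
      ‖Matrix.toEuclideanLin Jᵀ a‖ ≤ (1 + α * σ / ‖g‖) * ‖a‖ := by
  intro a
  have hgn : 0 < ‖g‖ := norm_pos_iff.2 hg
  have hn : n ≠ 0 := by
    rintro rfl
    exact hg (Subsingleton.elim g 0)
  have hσ0 : 0 ≤ σ :=
    le_trans (abs_nonneg _) (hσ ⟨0, Nat.pos_of_ne_zero hn⟩)
  have hgg : ∑ i, g i * g i = ‖g‖ ^ 2 := by
    rw [← real_inner_self_eq_norm_sq, PiLp.inner_apply]
    simp [sq]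
  have hu1 : ∑ i, u i * u i = 1 := by
    subst hu
    have : ∑ i, (‖g‖⁻¹ * g i) * (‖g‖⁻¹ * g i) = ‖g‖⁻¹ * ‖g‖⁻¹ * ∑ i, g i * g i := by
      rw [Finset.mul_sum]; apply Finset.sum_congr rfl; intro i _; ring
    rw [this, hgg]
    field_simp
  set P : Matrix (Fin n) (Fin n) ℝ := 1 - Matrix.vecMulVec u u with hP
  have hHt : Hᵀ = H := by
    rw [← Matrix.conjTranspose_eq_transpose_of_trivial]; exact hH
  have hPt : Pᵀ = P := by
    rw [hP, Matrix.transpose_sub, Matrix.transpose_one]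
    congr 1
    ext i j
    simp [Matrix.vecMulVec, mul_comm]
  have hJT : Jᵀ = 1 + (α * ‖g‖⁻¹) • (H * P) := by
    rw [hJ]
    rw [Matrix.transpose_add, Matrix.transpose_one, Matrix.transpose_smul,
      Matrix.transpose_mul, Matrix.transpose_smul, hHt, hPt,
      Matrix.smul_mul, smul_smul]
  have key : Matrix.toEuclideanLin Jᵀ a
      = a + (α * ‖g‖⁻¹) • Matrix.toEuclideanLin H (Matrix.toEuclideanLin P a) := by
    rw [hJT]
    apply (WithLp.equiv 2 (Fin n → ℝ)).injective
    ext j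
    simp [Matrix.toEuclideanLin_apply, Matrix.add_mulVec, Matrix.one_mulVec,
      Matrix.smul_mulVec, Matrix.mulVec_mulVec]
  rw [key]
  have h1 : ‖a + (α * ‖g‖⁻¹) • Matrix.toEuclideanLin H (Matrix.toEuclideanLin P a)‖
      ≤ ‖a‖ + (α * ‖g‖⁻¹) * ‖Matrix.toEuclideanLin H (Matrix.toEuclideanLin P a)‖ := by
    refine le_trans (norm_add_le _ _) ?_
    rw [norm_smul, Real.norm_eq_abs, abs_of_nonneg (by positivity)]
  have h2 : ‖Matrix.toEuclideanLin H (Matrix.toEuclideanLin P a)‖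
      ≤ σ * ‖Matrix.toEuclideanLin P a‖ := eigen_bound H hH σ hσ hσ0 _
  have h3 : ‖Matrix.toEuclideanLin P a‖ ≤ ‖a‖ := proj_bound u hu1 a
  have h4 : σ * ‖Matrix.toEuclideanLin P a‖ ≤ σ * ‖a‖ :=
    mul_le_mul_of_nonneg_left h3 hσ0
  have hc : 0 ≤ α * ‖g‖⁻¹ := by positivity
  calc _ ≤ ‖a‖ + (α * ‖g‖⁻¹) * ‖Matrix.toEuclideanLin H (Matrix.toEuclideanLin P a)‖ := h1
    _ ≤ ‖a‖ + (α * ‖g‖⁻¹) * (σ * ‖a‖) :=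
      add_le_add_right (mul_le_mul_of_nonneg_left (le_trans h2 h4) hc) _
    _ = (1 + α * σ / ‖g‖) * ‖a‖ := by field_simp
end

section
/- Let g ∈ ℝⁿ be nonzero and H = ∇²ℓ symmetric with maximum absolute eigenvalue σ, α > 0, 0 < k ≤ 1. Define f̃(x) = k·(f(x) - c) + c where f(x) = x + α·g/‖g‖₂ (with constant g for differentiation at the given point). Then for all a ∈ ℝⁿ, ‖(∇f̃)ᵀ a‖₂ ≤ (1 + α·σ/‖g‖₂)·‖a‖₂. -/
open Matrix


lemma specbound {n : ℕ} (H : Matrix (Fin n) (Fin n) ℝ) (hH : H.IsHermitian)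
    (σ : ℝ) (hσ : ∀ i, |hH.eigenvalues i| ≤ σ) (v : EuclideanSpace ℝ (Fin n)) :
    ‖Matrix.toEuclideanLin H v‖ ≤ σ * ‖v‖ := by
  rcases Nat.eq_zero_or_pos n with h0 | hn
  · subst h0
    have : Subsingleton (EuclideanSpace ℝ (Fin 0)) := by infer_instance
    rw [Subsingleton.elim v 0, Subsingleton.elim (Matrix.toEuclideanLin H 0) (0 : EuclideanSpace ℝ (Fin 0))]
    simp
  have hσ0 : 0 ≤ σ := le_trans (abs_nonneg _) (hσ ⟨0, hn⟩)
  set b := hH.eigenvectorBasis with hb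
  have hT : ∀ j, Matrix.toEuclideanLin H (b j) = hH.eigenvalues j • b j := by
    intro j
    have := hH.mulVec_eigenvectorBasis j
    apply (WithLp.equiv 2 (Fin n → ℝ)).injective
    simpa [Matrix.toEuclideanLin_apply] using this
  have hrepr : ∀ i, b.repr (Matrix.toEuclideanLin H v) i = hH.eigenvalues i * b.repr v i := by
    intro i
    conv_lhs => rw [← b.sum_repr v]
    rw [map_sum ((Matrix.toEuclideanLin H))]
    simp only [_root_.map_smul, hT]
    rw [map_sum]
    simp only [_root_.map_smul, OrthonormalBasis.repr_self]
    rw [WithLp.ofLp_sum, Finset.sum_apply]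
    simp only [PiLp.smul_apply, smul_eq_mul, EuclideanSpace.single_apply]
    rw [Finset.sum_eq_single i]
    · simp [mul_comm, smul_smul]
    · intro j _ hj; simp [hj.symm]
    · simp
  rw [← b.repr.norm_map v, ← b.repr.norm_map (Matrix.toEuclideanLin H v),
    EuclideanSpace.norm_eq, EuclideanSpace.norm_eq]
  have hterm : ∀ i ∈ Finset.univ, ‖b.repr (Matrix.toEuclideanLin H v) i‖ ^ 2
      ≤ σ ^ 2 * ‖b.repr v i‖ ^ 2 := by
    intro i _
    rw [hrepr i]
    rw [Real.norm_eq_abs, Real.norm_eq_abs, abs_mul, mul_pow]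
    have h1 : |hH.eigenvalues i| ^ 2 ≤ σ ^ 2 := by
      have := hσ i
      nlinarith [abs_nonneg (hH.eigenvalues i)]
    exact mul_le_mul_of_nonneg_right h1 (sq_nonneg _)
  calc √(∑ i, ‖b.repr (Matrix.toEuclideanLin H v) i‖ ^ 2)
      ≤ √(∑ i, σ ^ 2 * ‖b.repr v i‖ ^ 2) := Real.sqrt_le_sqrt (Finset.sum_le_sum hterm)
    _ = σ * √(∑ i, ‖b.repr v i‖ ^ 2) := by
        rw [← Finset.mul_sum, Real.sqrt_mul (sq_nonneg σ), Real.sqrt_sq hσ0]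

lemma projbound {n : ℕ} (u : Fin n → ℝ) (hu : u ⬝ᵥ u = 1) (a : EuclideanSpace ℝ (Fin n)) :
    ‖Matrix.toEuclideanLin (1 - Matrix.vecMulVec u u) a‖ ≤ ‖a‖ := by
  set u' : EuclideanSpace ℝ (Fin n) := (WithLp.equiv 2 (Fin n → ℝ)).symm u with hu'
  set c : ℝ := inner ℝ u' a with hc
  have hcval : c = ∑ j, u j * a j := by
    simp [hc, PiLp.inner_apply, RCLike.inner_apply, hu', mul_comm]
  have hnu : ‖u'‖ ^ 2 = 1 := by
    rw [← real_inner_self_eq_norm_sq]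
    simp only [PiLp.inner_apply, RCLike.inner_apply, conj_trivial]
    simpa [hu', dotProduct] using hu
  have hPa : Matrix.toEuclideanLin (1 - Matrix.vecMulVec u u) a = a - c • u' := by
    apply (WithLp.equiv 2 (Fin n → ℝ)).injective
    rw [WithLp.equiv_apply, Matrix.ofLp_toEuclideanLin_apply]
    funext i
    simp only [WithLp.equiv_apply, WithLp.ofLp_sub, WithLp.ofLp_smul, Pi.sub_apply, Pi.smul_apply, smul_eq_mul,
      mulVec, dotProduct, Matrix.sub_apply, Matrix.one_apply, Matrix.vecMulVec_apply, sub_mul,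
      Finset.sum_sub_distrib, hcval]
    congr 1
    · rw [Finset.sum_eq_single i] <;> simp +contextual [eq_comm]
    · show _ = _ * u i
      rw [Finset.sum_mul]
      exact Finset.sum_congr rfl (fun j _ => by show u i * u j * a j = u j * a j * u i; ring)
  rw [hPa]
  have hsq : ‖a - c • u'‖ ^ 2 ≤ ‖a‖ ^ 2 := by
    rw [@norm_sub_sq_real]
    have h1 : inner ℝ a (c • u') = (c : ℝ) * c := by
      rw [real_inner_smul_right, real_inner_comm]
    rw [h1, norm_smul, mul_pow, hnu, Real.norm_eq_abs, sq_abs]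
    nlinarith [sq_nonneg c]
  have := Real.sqrt_le_sqrt hsq
  rwa [Real.sqrt_sq (norm_nonneg _), Real.sqrt_sq (norm_nonneg _)] at this

/-- Full Proposition 1: the composed step f̃ = Π ∘ f, with ∇f = J from Lemma 2 and
∇Π = k·I (0 < k ≤ 1), satisfies ‖(∇f̃)ᵀ a‖₂ ≤ (1 + ασ/‖g‖₂)‖a‖₂. -/
theorem stmt_8 {n : ℕ} (g : EuclideanSpace ℝ (Fin n)) (hg : g ≠ 0)
    (H : Matrix (Fin n) (Fin n) ℝ) (hH : H.IsHermitian)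
    (σ : ℝ) (hσ : ∀ i, |hH.eigenvalues i| ≤ σ)
    (α : ℝ) (hα : 0 < α) (k : ℝ) (hk0 : 0 < k) (hk1 : k ≤ 1)
    (u : Fin n → ℝ) (hu : u = fun i => ‖g‖⁻¹ * g i)
    (J : Matrix (Fin n) (Fin n) ℝ)
    (hJ : J = 1 + α • ((1 - Matrix.vecMulVec u u) * (‖g‖⁻¹ • H))) :
    ∀ a : EuclideanSpace ℝ (Fin n),
      ‖Matrix.toEuclideanLin (k • J)ᵀ a‖ ≤ (1 + α * σ / ‖g‖) * ‖a‖ := by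
  intro a
  have hgn : 0 < ‖g‖ := norm_pos_iff.mpr hg
  have hn : 0 < n := by
    rcases Nat.eq_zero_or_pos n with h0 | h; · subst h0; exact absurd (Subsingleton.elim g 0) hg
    exact h
  have hσ0 : 0 ≤ σ := le_trans (abs_nonneg _) (hσ ⟨0, hn⟩)
  -- u is a unit vector
  have hgg : (∑ i, g i * g i) = ‖g‖ ^ 2 := by
    rw [← real_inner_self_eq_norm_sq]
    simp only [PiLp.inner_apply, RCLike.inner_apply, conj_trivial]
  have hu1 : u ⬝ᵥ u = 1 := by
    subst hu
    simp only [dotProduct]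
    have : (∑ i, ‖g‖⁻¹ * g i * (‖g‖⁻¹ * g i)) = ‖g‖⁻¹ ^ 2 * ∑ i, g i * g i := by
      rw [Finset.mul_sum]; congr 1; funext i; ring
    rw [this, hgg]
    field_simp
  -- transpose computation
  have hHt : Hᵀ = H := by
    ext i j
    have := congrFun (congrFun hH.eq i) j
    simpa [Matrix.conjTranspose_apply] using this
  have hPt : (1 - Matrix.vecMulVec u u)ᵀ = 1 - Matrix.vecMulVec u u := by
    rw [Matrix.transpose_sub, Matrix.transpose_one]
    congr 1
    ext i j
    simp [Matrix.vecMulVec_apply, mul_comm]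
  set c : ℝ := α * ‖g‖⁻¹ with hcdef
  have hc0 : 0 ≤ c := le_of_lt (mul_pos hα (inv_pos.mpr hgn))
  have hJt : Jᵀ = 1 + c • (H * (1 - Matrix.vecMulVec u u)) := by
    rw [hJ, Matrix.transpose_add, Matrix.transpose_one, Matrix.transpose_smul,
      Matrix.transpose_mul, Matrix.transpose_smul, hHt, hPt, Matrix.smul_mul, smul_smul]
  -- decompose the linear map
  set P := (1 : Matrix (Fin n) (Fin n) ℝ) - Matrix.vecMulVec u u with hP
  have hdecomp : Matrix.toEuclideanLin (k • J)ᵀ a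
      = k • (a + c • Matrix.toEuclideanLin H (Matrix.toEuclideanLin P a)) := by
    rw [Matrix.transpose_smul, hJt, _root_.map_smul]
    rw [LinearMap.smul_apply]
    congr 1
    rw [map_add, _root_.map_smul, LinearMap.add_apply, LinearMap.smul_apply]
    congr 2
    · simp [Matrix.toEuclideanLin_apply]
    · apply (WithLp.equiv 2 (Fin n → ℝ)).injective
      simp [Matrix.ofLp_toEuclideanLin_apply, Matrix.mulVec_mulVec]
  rw [hdecomp]
  have h1 : ‖Matrix.toEuclideanLin H (Matrix.toEuclideanLin P a)‖
      ≤ σ * ‖Matrix.toEuclideanLin P a‖ := specbound H hH σ hσ _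
  have h2 : ‖Matrix.toEuclideanLin P a‖ ≤ ‖a‖ := projbound u hu1 a
  calc ‖k • (a + c • Matrix.toEuclideanLin H (Matrix.toEuclideanLin P a))‖
      = k * ‖a + c • Matrix.toEuclideanLin H (Matrix.toEuclideanLin P a)‖ := by
        rw [norm_smul, Real.norm_eq_abs, abs_of_pos hk0]
    _ ≤ 1 * ‖a + c • Matrix.toEuclideanLin H (Matrix.toEuclideanLin P a)‖ := by
        exact mul_le_mul_of_nonneg_right hk1 (norm_nonneg _)
    _ ≤ ‖a‖ + c * (σ * ‖a‖) := by
        rw [one_mul]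
        refine (norm_add_le _ _).trans ?_
        gcongr
        rw [norm_smul, Real.norm_eq_abs, abs_of_nonneg hc0]
        exact mul_le_mul_of_nonneg_left (h1.trans (by gcongr)) hc0
    _ = (1 + α * σ / ‖g‖) * ‖a‖ := by
        rw [hcdef]; field_simp
end
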